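/- Let φ, ψ ∈ 𝓢(ℝⁿ) be Schwartz functions, both having vanishing moments of order k for some k ≥ 1. Then there exists a constant C such that for all t > 0: ‖φ * D_t ψ‖_{L¹(ℝⁿ)} ≤ C · min(t, t^{−1})^k. -/

import Mathlib

open MeasureTheory
open scoped ENNReal

/-- The `L¹`-normalized dilation `D_t f (x) = tⁿ f(t • x)` on `ℝⁿ`. -/
noncomputable def dil (n : ℕ) (t : ℝ) (f : EuclideanSpace ℝ (Fin n) → ℂ) :
    EuclideanSpace ℝ (Fin n) → ℂ :=
  fun x => (t : ℂ) ^ n * f (t • x)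

/-- Convolution `(f * g)(x) = ∫ f(y) g(x − y) dy` on `ℝⁿ`. -/
noncomputable def conv (n : ℕ) (f g : EuclideanSpace ℝ (Fin n) → ℂ) :
    EuclideanSpace ℝ (Fin n) → ℂ :=
  fun x => ∫ y, f y * g (x - y)

/-- The monomial `x^α` associated to a multi-index `α`. -/
def mono (n : ℕ) (α : Fin n → ℕ) (x : EuclideanSpace ℝ (Fin n)) : ℂ :=
  ∏ i, (x i : ℂ) ^ (α i)

/-- `f` has vanishing moments of order `k`: `∫ f(x) x^α dx = 0`, with absolute
convergence, for every multi-index `α` with `|α| ≤ k − 1`. -/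
def VanishingMoments (n k : ℕ) (f : EuclideanSpace ℝ (Fin n) → ℂ) : Prop :=
  ∀ α : Fin n → ℕ, (∑ i, α i) + 1 ≤ k →
    Integrable (fun x => f x * mono n α x) ∧ (∫ x, f x * mono n α x) = 0

local notation "Eu" n => EuclideanSpace ℝ (Fin n)

lemma iteratedDeriv_line {n : ℕ} (f : (Eu n) → ℂ) (hf : ContDiff ℝ ((⊤ : ℕ∞) : WithTop ℕ∞) f) (x u : Eu n) :
    ∀ (j : ℕ) (θ : ℝ), iteratedDeriv j (fun θ : ℝ => f (x + θ • u)) θ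
      = iteratedFDeriv ℝ j f (x + θ • u) (fun _ => u) := by
  intro j
  induction j with
  | zero => intro θ; simp [iteratedDeriv_zero]
  | succ j ih =>
    intro θ
    rw [iteratedDeriv_succ]
    have hcong : (iteratedDeriv j fun θ : ℝ => f (x + θ • u))
        = fun θ : ℝ => iteratedFDeriv ℝ j f (x + θ • u) (fun _ => u) := funext ih
    rw [hcong]
    have hT : HasDerivAt (fun θ : ℝ => x + θ • u) u θ := by
      simpa using ((hasDerivAt_id θ).smul_const u).const_add x
    have hF : DifferentiableAt ℝ (iteratedFDeriv ℝ j f) (x + θ • u) :=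
      (hf.differentiable_iteratedFDeriv (by exact_mod_cast lt_top_iff_ne_top.2 (by simp))).differentiableAt
    have h1 : HasDerivAt (fun θ : ℝ => iteratedFDeriv ℝ j f (x + θ • u))
        (fderiv ℝ (iteratedFDeriv ℝ j f) (x + θ • u) u) θ :=
      hF.hasFDerivAt.comp_hasDerivAt θ hT
    have h2 := (ContinuousMultilinearMap.apply ℝ (fun _ : Fin j => Eu n) ℂ
        (fun _ => u)).hasFDerivAt.comp_hasDerivAt θ h1
    have h3 : HasDerivAt (fun θ : ℝ => iteratedFDeriv ℝ j f (x + θ • u) (fun _ => u))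
        ((fderiv ℝ (iteratedFDeriv ℝ j f) (x + θ • u) u) (fun _ => u)) θ := h2
    rw [h3.deriv]
    rw [iteratedFDeriv_succ_apply_left]
    congr 1

lemma iteratedDerivWithin_Icc_eq (f : ℝ → ℂ) (hf : ContDiff ℝ ((⊤ : ℕ∞) : WithTop ℕ∞) f) :
    ∀ (j : ℕ) {θ : ℝ}, θ ∈ Set.Icc (0:ℝ) 1 →
      iteratedDerivWithin j f (Set.Icc 0 1) θ = iteratedDeriv j f θ := by
  intro j
  induction j with
  | zero => intro θ _; simp
  | succ j ih =>
    intro θ hθ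
    rw [iteratedDerivWithin_succ]
    rw [derivWithin_congr (fun y hy => ih hy) (ih hθ)]
    rw [iteratedDeriv_succ]
    exact DifferentiableAt.derivWithin
      ((hf.differentiable_iteratedDeriv j (by exact_mod_cast lt_top_iff_ne_top.2 (by simp))).differentiableAt)
      ((uniqueDiffOn_Icc one_pos) θ hθ)

lemma taylor_bound {n m : ℕ} (f : (Eu n) → ℂ) (hf : ContDiff ℝ ((⊤ : ℕ∞) : WithTop ℕ∞) f) (x u : Eu n) {C : ℝ}
    (hC : ∀ θ ∈ Set.Icc (0:ℝ) 1, ‖iteratedFDeriv ℝ (m+1) f (x + θ • u)‖ ≤ C) :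
    ‖f (x + u) - ∑ j ∈ Finset.range (m+1),
        (j.factorial : ℝ)⁻¹ • iteratedFDeriv ℝ j f x (fun _ => u)‖
      ≤ C * ‖u‖ ^ (m+1) / m.factorial := by
  have hCnonneg : 0 ≤ C := le_trans (norm_nonneg _) (hC 0 (by norm_num))
  set g : ℝ → ℂ := fun θ : ℝ => f (x + θ • u) with hg
  have hgsmooth : ContDiff ℝ ((⊤ : ℕ∞) : WithTop ℕ∞) g := by
    apply hf.comp
    exact contDiff_const.add (contDiff_id.smul contDiff_const)
  have hgC : ContDiffOn ℝ (m+1 : ℕ) g (Set.Icc 0 1) :=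
    (hgsmooth.of_le (by exact_mod_cast le_top)).contDiffOn
  have hline := iteratedDeriv_line f hf x u
  have hwithin := iteratedDerivWithin_Icc_eq g hgsmooth
  have hbound : ∀ θ ∈ Set.Icc (0:ℝ) 1,
      ‖iteratedDerivWithin (m+1) g (Set.Icc 0 1) θ‖ ≤ C * ‖u‖ ^ (m+1) := by
    intro θ hθ
    rw [hwithin (m+1) hθ, hline (m+1) θ]
    calc ‖iteratedFDeriv ℝ (m+1) f (x + θ • u) (fun _ => u)‖
        ≤ ‖iteratedFDeriv ℝ (m+1) f (x + θ • u)‖ * ∏ _i : Fin (m+1), ‖u‖ :=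
          (iteratedFDeriv ℝ (m+1) f (x + θ • u)).le_opNorm _
      _ ≤ C * ‖u‖ ^ (m+1) := by
          rw [Finset.prod_const, Finset.card_univ, Fintype.card_fin]
          exact mul_le_mul_of_nonneg_right (hC θ hθ) (by positivity)
  have key := taylor_mean_remainder_bound (f := g) (a := 0) (b := 1) (x := 1)
    (n := m) zero_le_one hgC (Set.right_mem_Icc.2 zero_le_one) hbound
  rw [taylor_within_apply] at key
  have h1 : g 1 = f (x + u) := by simp [hg]
  have h2 : ∀ j ∈ Finset.range (m+1),
      (((j.factorial : ℝ))⁻¹ * (1 - 0 : ℝ) ^ j) • iteratedDerivWithin j g (Set.Icc 0 1) 0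
        = (j.factorial : ℝ)⁻¹ • iteratedFDeriv ℝ j f x (fun _ => u) := by
    intro j _
    rw [hwithin j (by norm_num), hline j 0]
    simp
  rw [Finset.sum_congr rfl h2, h1] at key
  calc _ ≤ C * ‖u‖ ^ (m + 1) * (1 - 0 : ℝ) ^ (m + 1) / m.factorial := key
    _ = C * ‖u‖ ^ (m+1) / m.factorial := by norm_num

-- fiber product identity
lemma prod_comp_fiber {d n : ℕ} (r : Fin d → Fin n) (h : Fin n → ℂ) :
    ∏ j : Fin d, h (r j) = ∏ i : Fin n, h i ^ (Finset.univ.filter (fun j => r j = i)).card := by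
  rw [Finset.prod_comp]
  apply Finset.prod_subset (Finset.subset_univ _)
  intro i _ hi
  have : (Finset.univ.filter (fun j => r j = i)).card = 0 := by
    rw [Finset.card_eq_zero, Finset.filter_eq_empty_iff]
    intro j _
    intro hj
    exact hi (Finset.mem_image.2 ⟨j, Finset.mem_univ j, hj⟩)
  rw [this, pow_zero]

lemma sum_card_fiber {d n : ℕ} (r : Fin d → Fin n) :
    (∑ i : Fin n, (Finset.univ.filter (fun j => r j = i)).card) = d := by
  rw [← Finset.card_eq_sum_card_fiberwise (fun j _ => Finset.mem_univ (r j))]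
  simp

lemma moment_term {n k d : ℕ} (ψ : (Eu n) → ℂ) (hψ : VanishingMoments n k ψ) (hd : d + 1 ≤ k)
    (m : ContinuousMultilinearMap ℝ (fun _ : Fin d => EuclideanSpace ℝ (Fin n)) ℂ) (c : ℝ) :
    Integrable (fun y : Eu n => ψ y * m (fun _ => c • y)) ∧
    (∫ y : Eu n, ψ y * m (fun _ => c • y)) = 0 := by
  classical
  set b := EuclideanSpace.basisFun (Fin n) ℝ with hb
  have hrep : ∀ y : Eu n, (c • y : Eu n) = ∑ i, (c * y i) • (b i : Eu n) := by
    intro y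
    have h0 : ∑ i, (c * y i) • (b i : Eu n) = c • ∑ i, (y i) • (b i : Eu n) := by
      rw [Finset.smul_sum]
      exact Finset.sum_congr rfl fun i _ => (smul_smul c (y i) _).symm
    have h1 : ∑ i, (y i) • (b i : Eu n) = y := by
      have := b.sum_repr y
      simpa [hb, EuclideanSpace.basisFun_repr] using this
    rw [h0, h1]
  set α : (Fin d → Fin n) → (Fin n → ℕ) :=
    fun r i => (Finset.univ.filter (fun j => r j = i)).card with hα
  have hexp : ∀ y : Eu n, ψ y * m (fun _ => c • y)
      = ∑ r : Fin d → Fin n,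
          ((c ^ d • m (fun j => (b (r j) : Eu n))) * (ψ y * mono n (α r) y)) := by
    intro y
    have h1 : m (fun _ => c • y) = ∑ r : Fin d → Fin n,
        (∏ j, (c * y (r j))) • m (fun j => (b (r j) : Eu n)) := by
      calc m (fun _ => c • y) = m (fun _ => ∑ i, (c * y i) • (b i : Eu n)) := by
            congr 1; ext j; exact congrFun (funext fun _ => hrep y) j ▸ rfl
        _ = ∑ r : Fin d → Fin n, m (fun j => (c * y (r j)) • (b (r j) : Eu n)) :=
            m.toMultilinearMap.map_sum (fun _ i => (c * y i) • (b i : Eu n))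
        _ = ∑ r : Fin d → Fin n, (∏ j, (c * y (r j))) • m (fun j => (b (r j) : Eu n)) := by
            apply Finset.sum_congr rfl; intro r _
            exact m.toMultilinearMap.map_smul_univ (fun j => c * y (r j)) _
    rw [h1, Finset.mul_sum]
    apply Finset.sum_congr rfl
    intro r _
    have h2 : (∏ j, (c * y (r j))) = c ^ d * ∏ j, y (r j) := by
      rw [Finset.prod_mul_distrib, Finset.prod_const, Finset.card_univ, Fintype.card_fin]
    have h3 : ((∏ j, y (r j) : ℝ) : ℂ) = mono n (α r) y := by
      push_cast
      rw [prod_comp_fiber r (fun i => (y i : ℂ))]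
      rfl
    rw [h2, ← smul_smul]
    simp only [Complex.real_smul]
    rw [← h3]; ring
  constructor
  · rw [funext hexp]
    apply integrable_finset_sum
    intro r _
    exact ((hψ (α r) (by rw [hα]; simpa [sum_card_fiber r] using hd)).1).const_mul _
  · rw [funext hexp, integral_finset_sum]
    · apply Finset.sum_eq_zero
      intro r _
      rw [integral_const_mul, (hψ (α r) (by rw [hα]; simpa [sum_card_fiber r] using hd)).2,
        mul_zero]
    · intro r _
      exact ((hψ (α r) (by rw [hα]; simpa [sum_card_fiber r] using hd)).1).const_mul _

lemma pow_one_add_le (N : ℕ) {a : ℝ} (ha : 0 ≤ a) : (1+a)^N ≤ 2^N * (1 + a^N) := by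
  rcases le_total a 1 with h | h
  · calc (1+a)^N ≤ 2^N := by
          apply pow_le_pow_left₀ (by positivity) (by linarith)
      _ ≤ 2^N * (1 + a^N) := by nlinarith [pow_nonneg ha N, pow_pos (show (0:ℝ)<2 by norm_num) N]
  · calc (1+a)^N ≤ (2*a)^N := by
          apply pow_le_pow_left₀ (by positivity) (by linarith)
      _ = 2^N * a^N := mul_pow 2 a N
      _ ≤ 2^N * (1 + a^N) := by nlinarith [pow_pos (show (0:ℝ)<2 by norm_num) N]

lemma core {n k : ℕ} (hk : 1 ≤ k) (φ ψ : SchwartzMap (EuclideanSpace ℝ (Fin n)) ℂ)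
    (hψ : VanishingMoments n k ⇑ψ) :
    ∃ A : ℝ, 0 ≤ A ∧ ∀ s : ℝ, 1 ≤ s → ∀ x : Eu n,
      ‖∫ y : Eu n, ψ y * φ (x + (-s⁻¹) • y)‖
        ≤ A * s⁻¹ ^ k * ((1 + ‖x‖) ^ (n+1))⁻¹ := by
  obtain ⟨m, rfl⟩ : ∃ m, k = m + 1 := ⟨k - 1, (Nat.succ_pred_eq_of_pos hk).symm⟩
  set N := n + 1 with hN
  set M : ℝ :=
    2 ^ N * (Finset.Iic (N, m+1)).sup (fun p => SchwartzMap.seminorm ℝ p.1 p.2) φ with hMdef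
  have hM : ∀ z : Eu n, (1+‖z‖)^N * ‖iteratedFDeriv ℝ (m+1) (⇑φ) z‖ ≤ M := fun z =>
    SchwartzMap.one_add_le_sup_seminorm_apply (m := (N, m+1)) le_rfl le_rfl φ z
  have hM0 : 0 ≤ M := by
    have := hM 0
    nlinarith [norm_nonneg (iteratedFDeriv ℝ (m+1) (⇑φ) 0), norm_nonneg (0 : Eu n),
      pow_pos (show (0:ℝ) < 1 + ‖(0 : Eu n)‖ by positivity) N]
  set g : (Eu n) → ℝ := fun y => ‖ψ y‖ * ((1+‖y‖)^N * ‖y‖^(m+1)) with hgdef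
  have hg_meas : AEStronglyMeasurable g volume :=
    (ψ.continuous.norm.mul
      (((continuous_const.add continuous_norm).pow N).mul (continuous_norm.pow (m+1)))).aestronglyMeasurable
  have hg_int : Integrable g := by
    apply Integrable.mono'
      (((ψ.integrable_pow_mul volume (m+1)).const_mul (2^N)).add
        ((ψ.integrable_pow_mul volume (N+(m+1))).const_mul (2^N))) hg_meas
    apply ae_of_all
    intro y
    have h1 : (1+‖y‖)^N ≤ 2^N * (1 + ‖y‖^N) := pow_one_add_le N (norm_nonneg y)
    have h2 : ‖g y‖ = g y := abs_of_nonneg (by positivity)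
    rw [h2, hgdef]
    simp only
    calc ‖ψ y‖ * ((1+‖y‖)^N * ‖y‖^(m+1)) ≤ ‖ψ y‖ * ((2^N * (1 + ‖y‖^N)) * ‖y‖^(m+1)) := by
          apply mul_le_mul_of_nonneg_left (mul_le_mul_of_nonneg_right h1 (by positivity))
            (norm_nonneg _)
      _ = 2^N * (‖y‖^(m+1) * ‖ψ y‖) + 2^N * (‖y‖^(N+(m+1)) * ‖ψ y‖) := by
          rw [pow_add]; ring
  set J := ∫ y : Eu n, g y with hJdef
  have hJ0 : 0 ≤ J := integral_nonneg fun y => by positivity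
  refine ⟨M * J / m.factorial, by positivity, ?_⟩
  intro s hs x
  have hs0 : 0 < s := lt_of_lt_of_le one_pos hs
  set c : ℝ := -s⁻¹ with hcdef
  have hc_abs : |c| = s⁻¹ := by
    rw [hcdef, abs_neg, abs_inv, abs_of_pos hs0]
  have hxpos : (0:ℝ) < (1 + ‖x‖)^N := by positivity
  -- Taylor remainder bound
  have hrem : ∀ y : Eu n,
      ‖φ (x + c • y) - ∑ j ∈ Finset.range (m+1),
          (j.factorial : ℝ)⁻¹ • iteratedFDeriv ℝ j (⇑φ) x (fun _ => c • y)‖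
        ≤ (M * (1+‖y‖)^N / (1+‖x‖)^N) * ‖c • y‖^(m+1) / m.factorial := by
    intro y
    apply taylor_bound (⇑φ) (φ.smooth ⊤) x (c • y)
    intro θ hθ
    set z := x + θ • (c • y) with hz
    have hzpos : (0:ℝ) < (1 + ‖z‖) ^ N := by positivity
    have hxz : 1 + ‖x‖ ≤ (1 + ‖z‖) * (1 + ‖y‖) := by
      have h1 : ‖x‖ ≤ ‖z‖ + ‖θ • (c • y)‖ := by
        have : x = z - θ • (c • y) := by rw [hz]; abel
        rw [this]
        exact norm_sub_le z _
      have h2 : ‖θ • (c • y)‖ ≤ ‖y‖ := by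
        rw [norm_smul, norm_smul, Real.norm_eq_abs, Real.norm_eq_abs, hc_abs,
          abs_of_nonneg hθ.1]
        have hsle : s⁻¹ ≤ 1 := inv_le_one_of_one_le₀ hs
        calc θ * (s⁻¹ * ‖y‖) ≤ 1 * (1 * ‖y‖) := by
              apply mul_le_mul hθ.2 (mul_le_mul hsle le_rfl (by positivity) one_pos.le)
                (by positivity) one_pos.le
          _ = ‖y‖ := by ring
      nlinarith [norm_nonneg z, norm_nonneg y]
    have hxzN : (1 + ‖x‖)^N ≤ (1 + ‖z‖)^N * (1 + ‖y‖)^N := by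
      rw [← mul_pow]
      exact pow_le_pow_left₀ (by positivity) hxz N
    rw [le_div_iff₀ hxpos]
    calc ‖iteratedFDeriv ℝ (m+1) (⇑φ) z‖ * (1 + ‖x‖)^N
        ≤ ‖iteratedFDeriv ℝ (m+1) (⇑φ) z‖ * ((1+‖z‖)^N * (1+‖y‖)^N) :=
          mul_le_mul_of_nonneg_left hxzN (norm_nonneg _)
      _ = ((1+‖z‖)^N * ‖iteratedFDeriv ℝ (m+1) (⇑φ) z‖) * (1+‖y‖)^N := by ring
      _ ≤ M * (1+‖y‖)^N := mul_le_mul_of_nonneg_right (hM z) (by positivity)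
  -- the Taylor polynomial part
  set T : (Eu n) → ℂ := fun y => ∑ j ∈ Finset.range (m+1),
      (j.factorial : ℝ)⁻¹ • iteratedFDeriv ℝ j (⇑φ) x (fun _ => c • y) with hTdef
  have hT_eq : (fun y : Eu n => ψ y * T y) = fun y : Eu n =>
      ∑ j ∈ Finset.range (m+1),
        (j.factorial : ℝ)⁻¹ • (ψ y * iteratedFDeriv ℝ j (⇑φ) x (fun _ => c • y)) := by
    funext y
    rw [hTdef]
    simp only
    rw [Finset.mul_sum]
    exact Finset.sum_congr rfl fun j _ => (mul_smul_comm _ _ _)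
  have hT_int : Integrable (fun y : Eu n => ψ y * T y) := by
    rw [hT_eq]
    apply integrable_finset_sum
    intro j hj
    exact ((moment_term (⇑ψ) hψ (Finset.mem_range.1 hj) (iteratedFDeriv ℝ j (⇑φ) x) c).1).smul ((j.factorial : ℝ)⁻¹)
  have hT_zero : (∫ y : Eu n, ψ y * T y) = 0 := by
    rw [hT_eq, integral_finset_sum]
    · apply Finset.sum_eq_zero
      intro j hj
      rw [integral_smul,
        (moment_term (⇑ψ) hψ (Finset.mem_range.1 hj) (iteratedFDeriv ℝ j (⇑φ) x) c).2,
        smul_zero]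
    · intro j hj
      exact ((moment_term (⇑ψ) hψ (Finset.mem_range.1 hj)
        (iteratedFDeriv ℝ j (⇑φ) x) c).1).smul ((j.factorial : ℝ)⁻¹)
  have hφ_int : Integrable (fun y : Eu n => ψ y * φ (x + c • y)) := by
    apply Integrable.mono' (ψ.integrable.norm.mul_const (SchwartzMap.seminorm ℝ 0 0 φ))
    · exact (ψ.continuous.mul (φ.continuous.comp
        (continuous_const.add (continuous_id.const_smul c)))).aestronglyMeasurable
    · apply ae_of_all
      intro y
      rw [norm_mul]
      exact mul_le_mul_of_nonneg_left (SchwartzMap.norm_le_seminorm ℝ φ _) (norm_nonneg _)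
  have hsub_eq : (∫ y : Eu n, ψ y * φ (x + c • y))
      = ∫ y : Eu n, ψ y * (φ (x + c • y) - T y) := by
    have : (fun y : Eu n => ψ y * (φ (x + c • y) - T y))
        = fun y : Eu n => ψ y * φ (x + c • y) - ψ y * T y := funext fun y => mul_sub _ _ _
    rw [this, integral_sub hφ_int hT_int, hT_zero, sub_zero]
  set K : ℝ := M * s⁻¹^(m+1) * ((1+‖x‖)^N)⁻¹ / m.factorial with hKdef
  have hptwise : ∀ y : Eu n, ‖ψ y * (φ (x + c • y) - T y)‖ ≤ K * g y := by
    intro y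
    rw [norm_mul]
    have h1 := hrem y
    have h2 : ‖c • y‖^(m+1) = s⁻¹^(m+1) * ‖y‖^(m+1) := by
      rw [norm_smul, Real.norm_eq_abs, hc_abs, mul_pow]
    calc ‖ψ y‖ * ‖φ (x + c • y) - T y‖
        ≤ ‖ψ y‖ * ((M * (1+‖y‖)^N / (1+‖x‖)^N) * ‖c • y‖^(m+1) / m.factorial) :=
          mul_le_mul_of_nonneg_left h1 (norm_nonneg _)
      _ = K * g y := by
          rw [h2, hKdef, hgdef]
          simp only
          field_simp
  have hnorm : ‖∫ y : Eu n, ψ y * φ (x + c • y)‖ ≤ K * J := by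
    rw [hsub_eq]
    calc ‖∫ y : Eu n, ψ y * (φ (x + c • y) - T y)‖
        ≤ ∫ y : Eu n, ‖ψ y * (φ (x + c • y) - T y)‖ := norm_integral_le_integral_norm _
      _ ≤ ∫ y : Eu n, K * g y := by
          have hdiff_int : Integrable (fun y : Eu n => ψ y * (φ (x + c • y) - T y)) := by
            have h := hφ_int.sub hT_int
            rw [show (fun y : Eu n => ψ y * (φ (x + c • y) - T y)) = (fun y : Eu n => ψ y * φ (x + c • y)) - (fun y : Eu n => ψ y * T y) from funext fun y => mul_sub _ _ _]
            exact h
          exact integral_mono hdiff_int.norm (hg_int.const_mul K) hptwise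
      _ = K * J := by rw [integral_const_mul]
  calc ‖∫ y : Eu n, ψ y * φ (x + c • y)‖ ≤ K * J := hnorm
    _ = M * J / m.factorial * s⁻¹ ^ (m+1) * ((1 + ‖x‖) ^ N)⁻¹ := by
        rw [hKdef]; ring

lemma conv_rep1 {n : ℕ} (φ ψ : (Eu n) → ℂ) {t : ℝ} (ht : 0 < t) (x : Eu n) :
    conv n φ (dil n t ψ) x = ∫ y : Eu n, ψ y * φ (x + (-t⁻¹) • y) := by
  have ht' : (t : ℂ) ≠ 0 := by exact_mod_cast ht.ne'
  have step1 : conv n φ (dil n t ψ) x = ∫ y : Eu n, φ (x - y) * dil n t ψ y := by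
    rw [conv]
    have := integral_sub_left_eq_self (fun y : Eu n => φ (x - y) * dil n t ψ y) volume x
    rw [← this]
    congr 1
    funext y
    rw [sub_sub_cancel]
  set H : (Eu n) → ℂ := fun z => φ (x + (-t⁻¹) • z) * ((t:ℂ)^n * ψ z) with hH
  have step2 : ∀ y : Eu n, φ (x - y) * dil n t ψ y = H (t • y) := by
    intro y
    rw [hH, dil]
    simp only
    have : x + (-t⁻¹) • (t • y) = x - y := by
      rw [smul_smul]
      have : -t⁻¹ * t = -1 := by field_simp
      rw [this, neg_one_smul, ← sub_eq_add_neg]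
    rw [this]
  have step3 : ∫ y : Eu n, H (t • y) = |((t ^ (Module.finrank ℝ (EuclideanSpace ℝ (Fin n))) : ℝ))⁻¹| • ∫ z, H z :=
    Measure.integral_comp_smul volume H t
  rw [step1]
  simp only [step2]
  rw [step3, finrank_euclideanSpace_fin]
  have step4 : ∫ z : Eu n, H z = (t:ℂ)^n * ∫ z : Eu n, ψ z * φ (x + (-t⁻¹) • z) := by
    rw [hH, ← integral_const_mul]
    congr 1
    funext z
    ring
  rw [step4, abs_of_pos (by positivity : (0:ℝ) < ((t ^ n))⁻¹)]
  rw [Complex.real_smul, ← mul_assoc]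
  push_cast
  rw [inv_mul_cancel₀ (pow_ne_zero n ht'), one_mul]

lemma conv_rep2 {n : ℕ} (φ ψ : (Eu n) → ℂ) (t : ℝ) (x : Eu n) :
    conv n φ (dil n t ψ) x
      = (t:ℂ)^n * ∫ y : Eu n, φ y * ψ ((t • x) + (-t) • y) := by
  rw [conv, ← integral_const_mul]
  congr 1
  funext y
  rw [dil]
  have : t • (x - y) = t • x + (-t) • y := by
    rw [smul_sub, neg_smul, ← sub_eq_add_neg]
  rw [this]
  ring

lemma eLpNorm_le_of_bound {n : ℕ} (f : (Eu n) → ℂ) (g : (Eu n) → ℝ) (hg : Integrable g)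
    (hbound : ∀ x, ‖f x‖ ≤ g x) :
    eLpNorm f 1 volume ≤ ENNReal.ofReal (∫ x, g x) := by
  have h0 : ∀ x : Eu n, 0 ≤ g x := fun x => le_trans (norm_nonneg _) (hbound x)
  rw [eLpNorm_one_eq_lintegral_enorm]
  calc ∫⁻ x, ‖f x‖ₑ ∂volume ≤ ∫⁻ x, ENNReal.ofReal (g x) ∂volume := by
        apply lintegral_mono
        intro x
        show ‖f x‖ₑ ≤ ENNReal.ofReal (g x)
        rw [← ofReal_norm_eq_enorm]
        exact ENNReal.ofReal_le_ofReal (hbound x)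
    _ = ENNReal.ofReal (∫ x, g x) :=
        (ofReal_integral_eq_lintegral_ofReal hg (ae_of_all _ h0)).symm

lemma weight_integrable (n : ℕ) :
    Integrable (fun x : Eu n => ((1 + ‖x‖) ^ (n+1))⁻¹) := by
  have h := integrable_one_add_norm (E := EuclideanSpace ℝ (Fin n)) (μ := volume)
    (r := (n+1 : ℝ)) (by rw [finrank_euclideanSpace_fin]; exact_mod_cast Nat.lt_succ_self n)
  apply h.congr (ae_of_all _ fun x => ?_)
  show (1 + ‖x‖) ^ (-((n:ℝ) + 1)) = ((1 + ‖x‖) ^ (n+1))⁻¹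
  rw [Real.rpow_neg (by positivity)]
  congr 1
  rw [← Real.rpow_natCast (1+‖x‖) (n+1)]
  push_cast
  ring_nf

/-- For Schwartz functions `φ, ψ` with vanishing moments of order `k ≥ 1`, there is a
constant `C` with `‖φ * D_t ψ‖_{L¹} ≤ C · min(t, t⁻¹)^k` for all `t > 0`. -/
theorem L1_norm_conv_dilate (n k : ℕ) (hk : 1 ≤ k)
    (φ ψ : SchwartzMap (EuclideanSpace ℝ (Fin n)) ℂ)
    (hφ : VanishingMoments n k ⇑φ) (hψ : VanishingMoments n k ⇑ψ) :
    ∃ C : ℝ, ∀ t : ℝ, 0 < t →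
      eLpNorm (conv n ⇑φ (dil n t ⇑ψ)) 1 volume ≤
        ENNReal.ofReal (C * min t t⁻¹ ^ k) := by
  obtain ⟨A₁, hA₁0, hA₁⟩ := core hk φ ψ hψ
  obtain ⟨A₂, hA₂0, hA₂⟩ := core hk ψ φ hφ
  set w : (Eu n) → ℝ := fun x => ((1 + ‖x‖) ^ (n+1))⁻¹ with hw
  have hw_int : Integrable w := weight_integrable n
  set I := ∫ x : Eu n, w x with hI
  have hI0 : 0 ≤ I := integral_nonneg fun x => by positivity
  refine ⟨(A₁ + A₂) * I, ?_⟩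
  intro t ht
  rcases le_total 1 t with h1t | ht1
  · -- t ≥ 1
    have hmin : min t t⁻¹ = t⁻¹ :=
      min_eq_right (le_trans (inv_le_one_of_one_le₀ h1t) h1t)
    have hb : ∀ x : Eu n, ‖conv n ⇑φ (dil n t ⇑ψ) x‖ ≤ A₁ * t⁻¹ ^ k * w x := by
      intro x
      rw [conv_rep1 ⇑φ ⇑ψ ht x]
      exact hA₁ t h1t x
    calc eLpNorm (conv n ⇑φ (dil n t ⇑ψ)) 1 volume
        ≤ ENNReal.ofReal (∫ x : Eu n, A₁ * t⁻¹ ^ k * w x) :=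
          eLpNorm_le_of_bound _ _ (hw_int.const_mul _) hb
      _ ≤ ENNReal.ofReal ((A₁ + A₂) * I * min t t⁻¹ ^ k) := by
          apply ENNReal.ofReal_le_ofReal
          rw [integral_const_mul, hmin]
          have hti : (0:ℝ) ≤ t⁻¹ ^ k := by positivity
          nlinarith [mul_nonneg (mul_nonneg hA₂0 hI0) hti]
  · -- t ≤ 1
    have hs1 : 1 ≤ t⁻¹ := (one_le_inv₀ ht).2 ht1
    have hmin : min t t⁻¹ = t := min_eq_left (le_trans ht1 hs1)
    have hb : ∀ x : Eu n, ‖conv n ⇑φ (dil n t ⇑ψ) x‖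
        ≤ (t ^ n * (A₂ * t ^ k)) * w (t • x) := by
      intro x
      rw [conv_rep2 ⇑φ ⇑ψ t x, norm_mul]
      have h1 : ‖(t:ℂ)^n‖ = t ^ n := by
        rw [norm_pow, Complex.norm_real, Real.norm_eq_abs, abs_of_pos ht]
      rw [h1]
      have h2 := hA₂ t⁻¹ hs1 (t • x)
      rw [inv_inv] at h2
      calc t ^ n * ‖∫ y : Eu n, φ y * ψ ((t • x) + (-t) • y)‖
          ≤ t ^ n * (A₂ * t ^ k * w (t • x)) := by
            apply mul_le_mul_of_nonneg_left _ (by positivity)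
            exact h2
        _ = (t ^ n * (A₂ * t ^ k)) * w (t • x) := by ring
    have hcomp_int : Integrable (fun x : Eu n => w (t • x)) :=
      hw_int.comp_smul ht.ne'
    calc eLpNorm (conv n ⇑φ (dil n t ⇑ψ)) 1 volume
        ≤ ENNReal.ofReal (∫ x : Eu n, (t ^ n * (A₂ * t ^ k)) * w (t • x)) :=
          eLpNorm_le_of_bound _ _ (hcomp_int.const_mul _) hb
      _ ≤ ENNReal.ofReal ((A₁ + A₂) * I * min t t⁻¹ ^ k) := by
          apply ENNReal.ofReal_le_ofReal
          rw [integral_const_mul, hmin]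
          have hcs : ∫ x : Eu n, w (t • x) = (t ^ n)⁻¹ * I := by
            have := Measure.integral_comp_smul volume w t
            rw [finrank_euclideanSpace_fin] at this
            rw [this, abs_of_pos (by positivity : (0:ℝ) < (t^n)⁻¹), smul_eq_mul]
          rw [hcs]
          have htn : (0:ℝ) < t ^ n := by positivity
          have heq : t ^ n * (A₂ * t ^ k) * ((t ^ n)⁻¹ * I) = A₂ * t ^ k * I := by
            field_simp
          rw [heq]
          nlinarith [mul_nonneg (mul_nonneg hA₁0 hI0) (pow_nonneg ht.le k)]
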